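/- Let f : (0,∞) → ℝ be continuously differentiable with f(1) = 0, and suppose there exists a function g : (0,∞) → ℝ such that f'(y) − f'(c·y) = g(c) for every y > 0 and every c > 0. Then there exist real constants a and b such that f(y) = a·y·log y + b·(y − 1) for all y > 0. -/

import Mathlib

/-- Uniqueness of the KL generator among `f`-divergence generators: if `f` is
continuously differentiable on `(0, ∞)` with `f 1 = 0` and there is a function `g`
with `f' y − f' (c y) = g c` for all `y, c > 0`, then `f y = a y log y + b (y − 1)`
on `(0, ∞)` for some real constants `a, b`. -/
theorem kl_unique_among_f_divergences
    (f f' : ℝ → ℝ)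
    (hderiv : ∀ y : ℝ, 0 < y → HasDerivAt f (f' y) y)
    (hcont : ContinuousOn f' (Set.Ioi (0 : ℝ)))
    (hf1 : f 1 = 0)
    (g : ℝ → ℝ)
    (hg : ∀ c : ℝ, 0 < c → ∀ y : ℝ, 0 < y → f' y - f' (c * y) = g c) :
    ∃ a b : ℝ, ∀ y : ℝ, 0 < y → f y = a * y * Real.log y + b * (y - 1) := by
  -- Step 1: multiplicative Cauchy equation for f' - f' 1
  have key : ∀ c : ℝ, 0 < c → ∀ y : ℝ, 0 < y →
      f' (c * y) - f' 1 = (f' c - f' 1) + (f' y - f' 1) := by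
    intro c hc y hy
    have h1 := hg c hc y hy
    have h2 := hg c hc 1 one_pos
    rw [mul_one] at h2
    linarith
  -- Step 2: transport to additive map via exp
  set φ : ℝ → ℝ := fun t => f' (Real.exp t) - f' 1 with hφ
  have φadd : ∀ s t : ℝ, φ (s + t) = φ s + φ t := by
    intro s t
    have := key (Real.exp s) (Real.exp_pos s) (Real.exp t) (Real.exp_pos t)
    simpa [hφ, Real.exp_add] using this
  have φcont : Continuous φ := by
    have : ContinuousOn (fun t => f' t - f' 1) (Set.Ioi (0:ℝ)) :=
      hcont.sub continuousOn_const
    exact this.comp_continuous Real.continuous_exp fun t => Real.exp_pos t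
  set Φ : ℝ →+ ℝ := AddMonoidHom.mk' φ fun s t => φadd s t with hΦ
  have φlin : ∀ t : ℝ, φ t = t * φ 1 := by
    intro t
    have := (Φ.toRealLinearMap φcont).map_smul t 1
    simpa [hΦ, smul_eq_mul, mul_comm] using this
  set a : ℝ := φ 1 with ha
  have hf'eq : ∀ y : ℝ, 0 < y → f' y = a * Real.log y + f' 1 := by
    intro y hy
    have h1 : φ (Real.log y) = Real.log y * a := φlin (Real.log y)
    rw [hφ] at h1
    simp only [Real.exp_log hy] at h1
    linarith [h1]
  refine ⟨a, f' 1 - a, ?_⟩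
  set b : ℝ := f' 1 - a with hb
  set F : ℝ → ℝ := fun y => f y - (a * (y * Real.log y) + b * (y - 1)) with hF
  have hF' : ∀ y ∈ Set.Ioi (0:ℝ), HasDerivWithinAt F 0 (Set.Ioi (0:ℝ)) y := by
    intro y hy
    have hy' : (0:ℝ) < y := hy
    have hxl : HasDerivAt (fun x : ℝ => x * Real.log x) (Real.log y + 1) y := by
      have := (hasDerivAt_id y).mul (Real.hasDerivAt_log hy'.ne')
      have e : Real.log y + 1 = 1 * Real.log y + id y * y⁻¹ := by
        simp [mul_inv_cancel₀ hy'.ne']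
      rw [e]; exact this
    have h1 : HasDerivAt (fun x : ℝ => a * (x * Real.log x))
        (a * (Real.log y + 1)) y := hxl.const_mul a
    have h2 : HasDerivAt (fun x : ℝ => b * (x - 1)) b y := by
      simpa using ((hasDerivAt_id y).sub_const 1).const_mul b
    have h3 : HasDerivAt F (f' y - (a * (Real.log y + 1) + b)) y :=
      (hderiv y hy').sub (h1.add h2)
    have hz : f' y - (a * (Real.log y + 1) + b) = 0 := by
      rw [hf'eq y hy', hb]; ring
    rw [hz] at h3
    exact h3.hasDerivWithinAt
  have hconst : ∀ y : ℝ, 0 < y → F y = F 1 := by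
    intro y hy
    have := Convex.norm_image_sub_le_of_norm_hasDerivWithin_le
      (f' := fun _ => (0:ℝ)) (C := 0) hF' (fun x _ => by simp)
      (convex_Ioi (0:ℝ)) (Set.mem_Ioi.2 one_pos) (Set.mem_Ioi.2 hy)
    simpa [sub_eq_zero] using this
  intro y hy
  have hF1 : F 1 = 0 := by simp [hF, hf1]
  have h := hconst y hy
  rw [hF1, hF] at h
  simp only [] at h
  have : f y = a * (y * Real.log y) + b * (y - 1) := by linarith
  rw [this]; ring
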